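/- A topological group G is precompact (i.e., precompact with respect to its left uniformity) if and only if for every neighbourhood U of the identity there exists a finite set F ⊆ G such that FUF = G. -/

import Mathlib

open Filter Set Pointwise

attribute [local instance] Ultrafilter.mul Ultrafilter.semigroup

section Aux

variable {G : Type*} [Group G]

/-- There is an ultrafilter `p` on `G` (as a discrete semigroup) lying in a minimal
closed left ideal of the Stone–Čech semigroup: every element of the left ideal generated
by `p` generates a left ideal containing `p` back. -/
lemma exists_minimal_ultrafilter :
    ∃ p : Ultrafilter G, ∀ r : Ultrafilter G, ∃ w : Ultrafilter G, w * (r * p) = p := by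
  classical
  let S : Set (Set (Ultrafilter G)) :=
    {C | C.Nonempty ∧ IsClosed C ∧ ∀ q ∈ C, ∀ r : Ultrafilter G, r * q ∈ C}
  have huniv : (univ : Set (Ultrafilter G)) ∈ S :=
    ⟨⟨pure 1, mem_univ _⟩, isClosed_univ, fun _ _ _ => mem_univ _⟩
  obtain ⟨M, -, hM⟩ : ∃ M, M ⊆ univ ∧ Minimal (· ∈ S) M := by
    apply zorn_superset_nonempty S ?_ univ huniv
    intro c hcS hchain hcne
    have hne : Nonempty c := hcne.to_subtype
    refine ⟨⋂₀ c, ⟨?_, ?_, ?_⟩, fun s hs => sInter_subset_of_mem hs⟩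
    · apply IsCompact.nonempty_sInter_of_directed_nonempty_isCompact_isClosed
      · exact IsChain.directedOn hchain.symm
      · exact fun U hU => (hcS hU).1
      · exact fun U hU => (hcS hU).2.1.isCompact
      · exact fun U hU => (hcS hU).2.1
    · exact isClosed_sInter fun U hU => (hcS hU).2.1
    · intro q hq r
      exact fun U hU => (hcS hU).2.2 q (hq U hU) r
  obtain ⟨hMS, hMmin⟩ := hM
  obtain ⟨p, hp⟩ := hMS.1
  refine ⟨p, fun r => ?_⟩
  have hrpM : r * p ∈ M := hMS.2.2 p hp r
  have hDS : Set.range (· * (r * p)) ∈ S := by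
    refine ⟨⟨p * (r * p), ⟨p, rfl⟩⟩, ?_, ?_⟩
    · exact (isCompact_range (Ultrafilter.continuous_mul_left (r * p))).isClosed
    · rintro _ ⟨w, rfl⟩ r'
      exact ⟨r' * w, mul_assoc r' w (r * p)⟩
  have hDM : Set.range (· * (r * p)) ⊆ M := by
    rintro _ ⟨w, rfl⟩
    exact hMS.2.2 _ hrpM w
  have hMD : M ⊆ Set.range (· * (r * p)) := hMmin hDS hDM
  exact hMD hp

/-- Syndeticity: if `p` is a "minimal" ultrafilter and `A ∈ p`, then finitely many
left translates of `A* = {x | x⁻¹A ∈ p}` cover the group. -/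
lemma syndetic_of_minimal {p : Ultrafilter G}
    (hmin : ∀ r : Ultrafilter G, ∃ w : Ultrafilter G, w * (r * p) = p)
    {A : Set G} (hA : A ∈ p) :
    ∃ T : Set G, T.Finite ∧ ∀ x : G, ∃ t ∈ T, {z : G | t * x * z ∈ A} ∈ p := by
  classical
  by_contra hcon
  push_neg at hcon
  set B : G → Set G := fun t => {x | {z : G | t * x * z ∈ A} ∉ p} with hBdef
  have hFIP : ∀ T : Set G, T.Finite → (⋂ t ∈ T, B t).Nonempty := by
    intro T hT
    obtain ⟨x, hx⟩ := hcon T hT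
    exact ⟨x, by simpa [hBdef] using hx⟩
  -- build an ultrafilter containing every `B t`
  have hgen : (Filter.generate (Set.range B)).NeBot := by
    rw [Filter.neBot_iff]
    intro hbot
    have hempty : (∅ : Set G) ∈ Filter.generate (Set.range B) := by
      rw [hbot]; exact mem_bot
    rw [Filter.mem_generate_iff] at hempty
    obtain ⟨t, htsub, htfin, htint⟩ := hempty
    -- choose preimages
    have hchoice : ∀ s ∈ t, ∃ g : G, B g = s := fun s hs => htsub hs
    choose gfun hgfun using hchoice
    have hTfin : {y : G | ∃ s hs, gfun s hs = y}.Finite := htfin.dependent_image _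
    obtain ⟨x, hx⟩ := hFIP _ hTfin
    have hxint : x ∈ ⋂₀ t := by
      intro s hs
      have : x ∈ B (gfun s hs) := by
        have := mem_iInter₂.mp hx (gfun s hs) ⟨s, hs, rfl⟩
        exact this
      rwa [hgfun s hs] at this
    exact absurd (htint hxint) (notMem_empty x)
  obtain ⟨w, hw⟩ := hmin (@Ultrafilter.of _ (Filter.generate (Set.range B)) hgen)
  set r := @Ultrafilter.of _ (Filter.generate (Set.range B)) hgen with hrdef
  have hBr : ∀ t : G, B t ∈ r := by
    intro t
    have h1 : B t ∈ Filter.generate (Set.range B) :=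
      Filter.mem_generate_iff.mpr ⟨{B t}, by simp, finite_singleton _, by simp⟩
    exact (Ultrafilter.of_le _) h1
  -- A ∈ p = w * (r * p)
  have hA' : A ∈ (w * (r * p) : Ultrafilter G) := by rw [hw]; exact hA
  have h1 : {x : G | {y : G | x * y ∈ A} ∈ (r * p : Ultrafilter G)} ∈ w := hA'
  obtain ⟨x₀, hx₀⟩ := Filter.nonempty_of_mem (Ultrafilter.mem_coe.mpr h1)
  have h2 : {y : G | {z : G | x₀ * (y * z) ∈ A} ∈ p} ∈ r := hx₀
  have h3 : ({y : G | {z : G | x₀ * (y * z) ∈ A} ∈ p} ∩ B x₀).Nonempty :=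
    Filter.nonempty_of_mem (inter_mem (Ultrafilter.mem_coe.mpr h2)
      (Ultrafilter.mem_coe.mpr (hBr x₀)))
  obtain ⟨y, hy1, hy2⟩ := h3
  apply hy2
  have hy1' : {z : G | x₀ * (y * z) ∈ A} ∈ p := hy1
  have heq : {z : G | x₀ * (y * z) ∈ A} = {z : G | x₀ * y * z ∈ A} := by
    ext z; simp [mul_assoc]
  rwa [heq] at hy1'

end Aux

/-- A topological group is precompact (totally bounded for its left uniformity)
iff for every neighbourhood `U` of the identity there is a finite set `F` with `FUF = G`. -/
theorem stmt_1 {G : Type*} [Group G] [TopologicalSpace G] [IsTopologicalGroup G]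
    (L : UniformSpace G)
    (hL : (@uniformity G L) = comap (fun p : G × G => p.1⁻¹ * p.2) (nhds 1)) :
    @TotallyBounded G L univ ↔
      ∀ U ∈ nhds (1 : G), ∃ F : Set G, F.Finite ∧ F * U * F = univ := by
  constructor
  · -- forward: totally bounded ⇒ FUF covers
    intro hTB U hU
    have hS : U ∩ U⁻¹ ∈ nhds (1 : G) := inter_mem hU (inv_mem_nhds_one G hU)
    have hd : (fun p : G × G => p.1⁻¹ * p.2) ⁻¹' (U ∩ U⁻¹) ∈ @uniformity G L := by
      rw [hL]; exact preimage_mem_comap hS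
    obtain ⟨t, ht, hcover⟩ := hTB _ hd
    refine ⟨t ∪ {1}, ht.union (finite_singleton 1), ?_⟩
    apply Subset.antisymm (subset_univ _)
    intro x _
    have hx := hcover (mem_univ x)
    rw [mem_iUnion₂] at hx
    obtain ⟨y, hy, hxy⟩ := hx
    have hxy' : x⁻¹ * y ∈ U ∩ U⁻¹ := hxy
    have hyx : y⁻¹ * x ∈ U := by
      have h1 : (x⁻¹ * y)⁻¹ ∈ U := Set.mem_inv.mp hxy'.2
      rwa [mul_inv_rev, inv_inv] at h1
    have hxe : x = y * (y⁻¹ * x) * 1 := by group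
    rw [hxe]
    exact mul_mem_mul (mul_mem_mul (mem_union_left _ hy) hyx)
      (mem_union_right _ (mem_singleton 1))
  · -- backward: FUF covers ⇒ totally bounded
    intro h d hd
    rw [hL, mem_comap] at hd
    obtain ⟨V, hV, hVd⟩ := hd
    obtain ⟨U, hU, hsplit⟩ := exists_nhds_split_inv hV
    obtain ⟨F, hFfin, hFUF⟩ := h U hU
    obtain ⟨p, hpmin⟩ := exists_minimal_ultrafilter (G := G)
    -- some cell a*U*b is p-large
    have hbig : (⋃ a ∈ F, ⋃ b ∈ F, (fun u => a * u * b) '' U) ∈ p := by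
      refine mem_of_superset univ_mem ?_
      rw [← hFUF]
      intro x hx
      rw [Set.mem_mul] at hx
      obtain ⟨w, hw, b, hb, rfl⟩ := hx
      rw [Set.mem_mul] at hw
      obtain ⟨a, ha, u, hu, rfl⟩ := hw
      exact mem_biUnion ha (mem_biUnion hb ⟨u, hu, rfl⟩)
    rw [Ultrafilter.finite_biUnion_mem_iff hFfin] at hbig
    obtain ⟨a, ha, hbig2⟩ := hbig
    rw [Ultrafilter.finite_biUnion_mem_iff hFfin] at hbig2
    obtain ⟨b, hb, hA⟩ := hbig2
    obtain ⟨T, hTfin, hTsynd⟩ := syndetic_of_minimal hpmin hA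
    refine ⟨(fun t => t⁻¹ * a) '' T, hTfin.image _, ?_⟩
    intro x _
    obtain ⟨t, ht, hS⟩ := hTsynd (x * a⁻¹)
    have hint : ((fun u => a * u * b) '' U ∩
        {z : G | t * (x * a⁻¹) * z ∈ (fun u => a * u * b) '' U}).Nonempty :=
      Filter.nonempty_of_mem (inter_mem (Ultrafilter.mem_coe.mpr hA)
        (Ultrafilter.mem_coe.mpr hS))
    obtain ⟨z, hz1, hz2⟩ := hint
    obtain ⟨u₁, hu₁, hzeq⟩ := hz1
    obtain ⟨u₂, hu₂, hzeq'⟩ := hz2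
    -- hzeq : a * u₁ * b = z ; hzeq' : a * u₂ * b = t * (x * a⁻¹) * z
    have key : x⁻¹ * (t⁻¹ * a) = u₁ * u₂⁻¹ := by
      have h1 : a * u₂ = t * x * u₁ := by
        have h2 : t * (x * a⁻¹) * (a * u₁ * b) = t * x * u₁ * b := by group
        rw [← hzeq, h2] at hzeq'
        exact mul_right_cancel hzeq'
      calc x⁻¹ * (t⁻¹ * a)
          = x⁻¹ * t⁻¹ * (a * u₂) * u₂⁻¹ := by group
        _ = x⁻¹ * t⁻¹ * (t * x * u₁) * u₂⁻¹ := by rw [h1]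
        _ = u₁ * u₂⁻¹ := by group
    have hxV : x⁻¹ * (t⁻¹ * a) ∈ V := by
      rw [key, ← div_eq_mul_inv]
      exact hsplit u₁ hu₁ u₂ hu₂
    rw [mem_iUnion₂]
    exact ⟨t⁻¹ * a, mem_image_of_mem _ ht, hVd hxV⟩
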